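/- Let n < m and let ũ : ℝ^{n−1} × ℝ → ℝ be any smooth function with ∂ũ/∂z(y,z) > 0 for all (y,z). Then the regularized map Z̃ : ℝⁿ → ℝᵐ defined by Z̃(y,z) = (y, z³ + 3(|y|² − 1)z, ũ(y,z), 0, …, 0) is an injective immersion: Z̃ is injective on ℝⁿ and its derivative at every point is an injective linear map ℝⁿ → ℝᵐ. -/

import Mathlib

/-- The regularized wrinkled-embedding model: the unfolding function of
`Z(n,m)` is replaced by a function `ũ`,
`Z̃(y,z) = (y, z³ + 3(|y|² − 1)z, ũ(y,z), 0, …, 0)`. -/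
noncomputable def Zreg (k l : ℕ) (ut : EuclideanSpace ℝ (Fin k) × ℝ → ℝ)
    (p : EuclideanSpace ℝ (Fin k) × ℝ) :
    EuclideanSpace ℝ (Fin k) × ℝ × ℝ × EuclideanSpace ℝ (Fin l) :=
  (p.1, p.2^3 + 3*(‖p.1‖^2 - 1)*p.2, ut p, 0)

lemma slice_hasDerivAt {k : ℕ} (ut : EuclideanSpace ℝ (Fin k) × ℝ → ℝ)
    (hut : ContDiff ℝ (⊤ : ℕ∞) ut) (y : EuclideanSpace ℝ (Fin k)) (z : ℝ) :
    HasDerivAt (fun t => ut (y, t)) (fderiv ℝ ut (y, z) (0, 1)) z := by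
  have h1 : HasDerivAt (fun t => ((y, t) : EuclideanSpace ℝ (Fin k) × ℝ))
      ((0 : EuclideanSpace ℝ (Fin k)), (1 : ℝ)) z :=
    (hasDerivAt_const z y).prodMk (hasDerivAt_id z)
  exact ((hut.differentiable (by simp) (y, z)).hasFDerivAt).comp_hasDerivAt z h1

lemma Zreg_diff {k l : ℕ} (ut : EuclideanSpace ℝ (Fin k) × ℝ → ℝ)
    (hut : ContDiff ℝ (⊤ : ℕ∞) ut) (p : EuclideanSpace ℝ (Fin k) × ℝ) :
    DifferentiableAt ℝ (Zreg k l ut) p := by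
  refine differentiableAt_fst.prodMk (DifferentiableAt.prodMk ?_
    (((hut.differentiable (by simp)).differentiableAt).prodMk
      (differentiableAt_const 0)))
  have h2 : DifferentiableAt ℝ (fun q : EuclideanSpace ℝ (Fin k) × ℝ => ‖q.1‖^2) p :=
    differentiableAt_fst.norm_sq ℝ
  exact (differentiableAt_snd.pow 3).add
    (((differentiableAt_const (3:ℝ)).mul (h2.sub (differentiableAt_const 1))).mul
      differentiableAt_snd)

/-- If `ũ` is smooth with everywhere positive `z`-derivative, then the
regularized model `Z̃(y,z) = (y, z³ + 3(|y|²−1)z, ũ(y,z), 0, …, 0)` is an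
injective immersion: it is injective and its derivative is everywhere an
injective linear map. -/
theorem Zreg_injective_immersion (n m : ℕ) (hn : 1 ≤ n) (hnm : n < m)
    (ut : EuclideanSpace ℝ (Fin (n - 1)) × ℝ → ℝ)
    (hut : ContDiff ℝ (⊤ : ℕ∞) ut)
    (hpos : ∀ p : EuclideanSpace ℝ (Fin (n - 1)) × ℝ,
      0 < deriv (fun z => ut (p.1, z)) p.2) :
    Function.Injective (Zreg (n - 1) (m - n - 1) ut) ∧
    ∀ p : EuclideanSpace ℝ (Fin (n - 1)) × ℝ,
      Function.Injective ⇑(fderiv ℝ (Zreg (n - 1) (m - n - 1) ut) p) := by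
  have hsm : ∀ y : EuclideanSpace ℝ (Fin (n - 1)), StrictMono (fun t => ut (y, t)) := by
    intro y
    apply strictMono_of_deriv_pos
    intro z
    exact hpos (y, z)
  constructor
  · intro p q h
    simp only [Zreg, Prod.mk.injEq] at h
    obtain ⟨h1, -, h3, -⟩ := h
    have h3' : ut (p.1, p.2) = ut (p.1, q.2) := by
      rw [Prod.mk.eta, h1, Prod.mk.eta]; exact h3
    have h2 : p.2 = q.2 := (hsm p.1).injective h3'
    exact Prod.ext h1 h2
  · intro p
    have hZ : DifferentiableAt ℝ (Zreg (n-1) (m-n-1) ut) p := Zreg_diff ut hut p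
    have key : ∀ v, fderiv ℝ (Zreg (n-1) (m-n-1) ut) p v = 0 → v = 0 := by
      intro v hv
      have hfst : (ContinuousLinearMap.fst ℝ (EuclideanSpace ℝ (Fin (n-1)))
            (ℝ × ℝ × EuclideanSpace ℝ (Fin (m-n-1)))).comp
            (fderiv ℝ (Zreg (n-1) (m-n-1) ut) p)
          = ContinuousLinearMap.fst ℝ (EuclideanSpace ℝ (Fin (n-1))) ℝ := by
        have hc := (ContinuousLinearMap.fst ℝ (EuclideanSpace ℝ (Fin (n-1)))
            (ℝ × ℝ × EuclideanSpace ℝ (Fin (m-n-1)))).hasFDerivAt.comp p hZ.hasFDerivAt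
        exact hc.unique (hasFDerivAt_fst)
      have hv1 : v.1 = 0 := by
        have h := ContinuousLinearMap.ext_iff.1 hfst v
        simp only [ContinuousLinearMap.comp_apply, hv] at h
        simpa using h.symm
      set π3 : (EuclideanSpace ℝ (Fin (n-1)) × ℝ × ℝ × EuclideanSpace ℝ (Fin (m-n-1)))
          →L[ℝ] ℝ :=
        (ContinuousLinearMap.fst ℝ ℝ (EuclideanSpace ℝ (Fin (m-n-1)))).comp
          ((ContinuousLinearMap.snd ℝ ℝ (ℝ × EuclideanSpace ℝ (Fin (m-n-1)))).comp
            (ContinuousLinearMap.snd ℝ (EuclideanSpace ℝ (Fin (n-1)))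
              (ℝ × ℝ × EuclideanSpace ℝ (Fin (m-n-1)))))
      have hπ3 : π3.comp (fderiv ℝ (Zreg (n-1) (m-n-1) ut) p) = fderiv ℝ ut p := by
        have hc : HasFDerivAt (fun q => π3 (Zreg (n-1) (m-n-1) ut q))
            (π3.comp (fderiv ℝ (Zreg (n-1) (m-n-1) ut) p)) p :=
          π3.hasFDerivAt.comp p hZ.hasFDerivAt
        have heq : (fun q => π3 (Zreg (n-1) (m-n-1) ut q)) = ut := rfl
        rw [heq] at hc
        exact hc.unique (hut.differentiable (by simp) p).hasFDerivAt
      have hv3 : fderiv ℝ ut p v = 0 := by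
        have h := ContinuousLinearMap.ext_iff.1 hπ3 v
        rw [← h]
        simp [hv]
      have hvpair : v = v.2 • ((0 : EuclideanSpace ℝ (Fin (n-1))), (1 : ℝ)) := by
        rw [Prod.smul_mk, smul_zero, smul_eq_mul, mul_one, ← hv1]
      have hder : deriv (fun t => ut (p.1, t)) p.2 = fderiv ℝ ut p (0, 1) := by
        have h := slice_hasDerivAt ut hut p.1 p.2
        rw [Prod.mk.eta] at h
        exact h.deriv
      have hfpos : 0 < fderiv ℝ ut p (0, 1) := by
        rw [← hder]; exact hpos p
      have hv2 : v.2 = 0 := by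
        rw [hvpair, map_smul, smul_eq_mul] at hv3
        rcases mul_eq_zero.1 hv3 with h | h
        · exact h
        · exact absurd h hfpos.ne'
      rw [hvpair, hv2, zero_smul]
    intro v w hvw
    have h0 : fderiv ℝ (Zreg (n-1) (m-n-1) ut) p (v - w) = 0 := by
      rw [map_sub, hvw, sub_self]
    exact sub_eq_zero.1 (key _ h0)
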